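/- arXiv:math/0611724 — 2 statements merged into one kernel-verified Lean document; each statement's English description precedes it below -/
import Mathlib

section
/- Let H be a separable infinite-dimensional Hilbert space, E a Banach space, and let 𝒯 ⊆ ℬ(H,E) be uniformly γ-radonifying. Then the closure of 𝒯 in the strong operator topology of ℬ(H,E) is uniformly γ-radonifying. -/
open MeasureTheory Filter ENNReal ProbabilityTheory
open scoped NNReal Topology

noncomputable section

/-- A Gaussian sequence: i.i.d. standard real Gaussian random variables. -/
structure IsGaussianSeq {Ω : Type*} [MeasurableSpace Ω] (μ : Measure Ω) (γ : ℕ → Ω → ℝ) : Prop where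
  measurable : ∀ k, Measurable (γ k)
  indep : iIndepFun γ μ
  gaussian : ∀ k, μ.map (γ k) = gaussianReal 0 1


lemma integrable_sq_gaussian : Integrable (fun x : ℝ => x ^ 2) (gaussianReal 0 1) := by
  rw [gaussianReal_of_var_ne_zero 0 one_ne_zero,
    integrable_withDensity_iff (measurable_gaussianPDF 0 1)
      (ae_of_all _ fun x => ENNReal.ofReal_lt_top)]
  have h : Integrable (fun x : ℝ => x ^ (2:ℝ) * Real.exp (-(2⁻¹) * x ^ 2)) :=
    integrable_rpow_mul_exp_neg_mul_sq (b := 2⁻¹) (by norm_num) (s := 2) (by norm_num)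
  have h2 := h.const_mul ((Real.sqrt (2 * Real.pi * 1))⁻¹)
  simp only [show (2:ℝ)=((2:ℕ):ℝ) by norm_num, Real.rpow_natCast] at h2
  refine h2.congr (ae_of_all _ fun x => ?_)
  simp only [gaussianPDF, ENNReal.toReal_ofReal (gaussianPDFReal_nonneg 0 1 x)]
  simp only [gaussianPDFReal]
  push_cast
  ring_nf

lemma memLp_id_gaussian : MemLp (id : ℝ → ℝ) 2 (gaussianReal 0 1) :=
  (memLp_two_iff_integrable_sq aestronglyMeasurable_id).2 integrable_sq_gaussian

section aux

variable {Ω : Type*} [MeasurableSpace Ω] {μ : Measure Ω} [IsProbabilityMeasure μ]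
  {γ : ℕ → Ω → ℝ}
  {E : Type*} [NormedAddCommGroup E] [NormedSpace ℝ E] [CompleteSpace E]

lemma eLpNorm_gamma (hγ : IsGaussianSeq μ γ) (k : ℕ) :
    eLpNorm (γ k) 2 μ = eLpNorm (id : ℝ → ℝ) 2 (gaussianReal 0 1) := by
  rw [← hγ.gaussian k,
    eLpNorm_map_measure aestronglyMeasurable_id (hγ.measurable k).aemeasurable]
  rfl

lemma memLp_gamma (hγ : IsGaussianSeq μ γ) (k : ℕ) : MemLp (γ k) 2 μ := by
  have h := memLp_id_gaussian
  rw [← hγ.gaussian k] at h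
  exact (memLp_map_measure_iff aestronglyMeasurable_id (hγ.measurable k).aemeasurable).mp h

lemma eLpNorm_smul_const' (f : Ω → ℝ) (x : E) :
    eLpNorm (fun ω => f ω • x) 2 μ = (‖x‖₊ : ℝ≥0∞) * eLpNorm f 2 μ := by
  rw [eLpNorm_eq_lintegral_rpow_enorm_toReal two_ne_zero ENNReal.ofNat_ne_top,
    eLpNorm_eq_lintegral_rpow_enorm_toReal two_ne_zero ENNReal.ofNat_ne_top]
  have ht : (2:ℝ≥0∞).toReal = 2 := by norm_num
  simp_rw [enorm_eq_nnnorm, nnnorm_smul, ENNReal.coe_mul, mul_comm ((‖f _‖₊ : ℝ≥0∞)),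
    ENNReal.mul_rpow_of_nonneg _ _ (by rw [ht]; norm_num : (0:ℝ) ≤ (2:ℝ≥0∞).toReal)]
  rw [lintegral_const_mul' _ _ (by rw [ht]; exact (ENNReal.rpow_lt_top_of_nonneg (by norm_num) ENNReal.coe_ne_top).ne),
    ENNReal.mul_rpow_of_nonneg _ _ (by rw [ht]; positivity), ← ENNReal.rpow_mul, ht]
  norm_num

lemma memLp_smul_const (hγ : IsGaussianSeq μ γ) (k : ℕ) (x : E) :
    MemLp (fun ω => γ k ω • x) 2 μ := by
  refine ⟨((hγ.measurable k).stronglyMeasurable.smul_const x).aestronglyMeasurable, ?_⟩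
  rw [eLpNorm_smul_const']
  exact ENNReal.mul_lt_top ENNReal.coe_lt_top ((memLp_gamma hγ k).2)

end aux

section aux2
set_option linter.unusedSectionVars false

variable {Ω : Type*} [MeasurableSpace Ω] {μ : Measure Ω} [IsProbabilityMeasure μ]
  {γ : ℕ → Ω → ℝ}
  {E : Type*} [NormedAddCommGroup E] [NormedSpace ℝ E] [CompleteSpace E]

lemma convL2_of_summable (hγ : IsGaussianSeq μ γ) (d : ℕ → E)
    (hd : Summable fun k => ‖d k‖) :
    ∃ g : Ω → E, AEStronglyMeasurable g μ ∧
      Tendsto (fun n => eLpNorm (fun ω => (∑ k ∈ Finset.range n, γ k ω • d k) - g ω) 2 μ)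
        atTop (𝓝 0) := by
  haveI : Fact ((1:ℝ≥0∞) ≤ 2) := ⟨one_le_two⟩
  set C : ℝ≥0∞ := eLpNorm (id : ℝ → ℝ) 2 (gaussianReal 0 1) with hC
  let f : ℕ → Lp E 2 μ := fun k => (memLp_smul_const hγ k (d k)).toLp _
  have hfnorm : ∀ k, ‖f k‖ = ‖d k‖ * C.toReal := by
    intro k
    rw [Lp.norm_def, eLpNorm_congr_ae (MemLp.coeFn_toLp _), eLpNorm_smul_const',
      eLpNorm_gamma hγ k, ENNReal.toReal_mul, ENNReal.coe_toReal, coe_nnnorm, ← hC]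
  have hf : Summable f := by
    refine Summable.of_norm ?_
    refine Summable.of_nonneg_of_le (fun k => norm_nonneg _) (fun k => (hfnorm k).le)
      (hd.mul_right C.toReal)
  set G : Lp E 2 μ := ∑' k, f k with hG
  have hcoe : ∀ n, (⇑(∑ k ∈ Finset.range n, f k) : Ω → E)
      =ᵐ[μ] fun ω => ∑ k ∈ Finset.range n, γ k ω • d k := by
    intro n
    induction n with
    | zero =>
      simp only [Finset.range_zero, Finset.sum_empty]
      filter_upwards [Lp.coeFn_zero E 2 μ] with ω h using h
    | succ n ih =>
      rw [Finset.sum_range_succ]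
      filter_upwards [Lp.coeFn_add (∑ k ∈ Finset.range n, f k) (f n), ih,
        MemLp.coeFn_toLp (memLp_smul_const hγ n (d n))] with ω h1 h2 h3
      simp only [h1, Pi.add_apply, h2, Finset.sum_range_succ]
      rw [h3]
  refine ⟨⇑G, Lp.aestronglyMeasurable G, ?_⟩
  have h1 : Tendsto (fun n => ∑ k ∈ Finset.range n, f k) atTop (𝓝 G) :=
    hf.hasSum.tendsto_sum_nat
  have h2 : Tendsto (fun n => ‖(∑ k ∈ Finset.range n, f k) - G‖) atTop (𝓝 0) := by
    simpa using (tendsto_iff_norm_sub_tendsto_zero.mp h1)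
  have h3 := (ENNReal.tendsto_ofReal h2)
  rw [ENNReal.ofReal_zero] at h3
  refine h3.congr fun n => ?_
  rw [Lp.norm_def, ENNReal.ofReal_toReal (Lp.eLpNorm_ne_top _)]
  refine eLpNorm_congr_ae ?_
  filter_upwards [Lp.coeFn_sub (∑ k ∈ Finset.range n, f k) G, hcoe n] with ω h4 h5
  simp only [h4, Pi.sub_apply, h5]

lemma sq_bound (x y : ℝ≥0∞) : (x + y) ^ 2 ≤ 4 * x ^ 2 + 4 * y ^ 2 := by
  have h1 : x + y ≤ 2 * max x y := by
    rw [two_mul]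
    exact add_le_add (le_max_left _ _) (le_max_right _ _)
  calc (x + y) ^ 2 ≤ (2 * max x y) ^ 2 := pow_le_pow_left' h1 2
    _ = 4 * (max x y) ^ 2 := by rw [mul_pow]; ring_nf
    _ ≤ 4 * (x ^ 2 + y ^ 2) := by
        gcongr
        rcases le_total x y with h | h
        · rw [max_eq_right h]; exact le_add_self
        · rw [max_eq_left h]; exact le_self_add
    _ = 4 * x ^ 2 + 4 * y ^ 2 := by ring

lemma elp2 (f : Ω → E) :
    eLpNorm f 2 μ = (∫⁻ ω, (‖f ω‖₊ : ℝ≥0∞) ^ 2 ∂μ) ^ (1/2 : ℝ) := by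
  rw [eLpNorm_eq_lintegral_rpow_enorm_toReal two_ne_zero ENNReal.ofNat_ne_top]
  have ht : (2:ℝ≥0∞).toReal = 2 := by norm_num
  rw [ht]
  congr 1
  refine lintegral_congr fun ω => ?_
  rw [show (2:ℝ) = ((2:ℕ):ℝ) by norm_num, ENNReal.rpow_natCast, enorm_eq_nnnorm]

lemma tendsto_eLpNorm_add {a b : ℕ → Ω → E} (ha : ∀ n, AEStronglyMeasurable (a n) μ)
    (hA : Tendsto (fun n => eLpNorm (a n) 2 μ) atTop (𝓝 0))
    (hB : Tendsto (fun n => eLpNorm (b n) 2 μ) atTop (𝓝 0)) :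
    Tendsto (fun n => eLpNorm (fun ω => a n ω + b n ω) 2 μ) atTop (𝓝 0) := by
  have key : ∀ n, eLpNorm (fun ω => a n ω + b n ω) 2 μ ≤
      2 * eLpNorm (a n) 2 μ + 2 * eLpNorm (b n) 2 μ := by
    intro n
    have h4 : ((4:ℝ≥0∞)) ^ (1/2:ℝ) = 2 := by
      rw [show (4:ℝ≥0∞) = 2 ^ (2:ℕ) by norm_num, ← ENNReal.rpow_natCast, ← ENNReal.rpow_mul]
      norm_num
    rw [elp2, elp2, elp2]
    have hpoint : ∀ ω, (‖a n ω + b n ω‖₊ : ℝ≥0∞) ^ 2 ≤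
        4 * (‖a n ω‖₊ : ℝ≥0∞) ^ 2 + 4 * (‖b n ω‖₊ : ℝ≥0∞) ^ 2 := by
      intro ω
      refine le_trans (le_trans ?_ (sq_bound _ _)) le_rfl
      have := nnnorm_add_le (a n ω) (b n ω)
      exact pow_le_pow_left' (by exact_mod_cast this) 2
    have hint : (∫⁻ ω, (‖a n ω + b n ω‖₊ : ℝ≥0∞) ^ 2 ∂μ) ≤
        4 * (∫⁻ ω, (‖a n ω‖₊ : ℝ≥0∞) ^ 2 ∂μ) + 4 * (∫⁻ ω, (‖b n ω‖₊ : ℝ≥0∞) ^ 2 ∂μ) := by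
      refine le_trans (lintegral_mono hpoint) ?_
      rw [lintegral_add_left' (((ha n).nnnorm.aemeasurable.coe_nnreal_ennreal.pow_const 2).const_mul 4),
        lintegral_const_mul' _ _ (by norm_num), lintegral_const_mul' _ _ (by norm_num)]
    calc (∫⁻ ω, (‖a n ω + b n ω‖₊ : ℝ≥0∞) ^ 2 ∂μ) ^ (1/2:ℝ)
        ≤ (4 * (∫⁻ ω, (‖a n ω‖₊ : ℝ≥0∞) ^ 2 ∂μ) +
            4 * (∫⁻ ω, (‖b n ω‖₊ : ℝ≥0∞) ^ 2 ∂μ)) ^ (1/2:ℝ) :=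
          ENNReal.rpow_le_rpow hint (by norm_num)
      _ ≤ (4 * (∫⁻ ω, (‖a n ω‖₊ : ℝ≥0∞) ^ 2 ∂μ)) ^ (1/2:ℝ) +
            (4 * (∫⁻ ω, (‖b n ω‖₊ : ℝ≥0∞) ^ 2 ∂μ)) ^ (1/2:ℝ) :=
          ENNReal.rpow_add_le_add_rpow _ _ (by norm_num) (by norm_num)
      _ = 2 * (∫⁻ ω, (‖a n ω‖₊ : ℝ≥0∞) ^ 2 ∂μ) ^ (1/2:ℝ) +
            2 * (∫⁻ ω, (‖b n ω‖₊ : ℝ≥0∞) ^ 2 ∂μ) ^ (1/2:ℝ) := by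
          rw [ENNReal.mul_rpow_of_nonneg _ _ (by norm_num : (0:ℝ) ≤ 1/2),
            ENNReal.mul_rpow_of_nonneg _ _ (by norm_num : (0:ℝ) ≤ 1/2), h4]
  have hbound : Tendsto (fun n => 2 * eLpNorm (a n) 2 μ + 2 * eLpNorm (b n) 2 μ)
      atTop (𝓝 0) := by
    have := (ENNReal.Tendsto.const_mul hA (Or.inr (ENNReal.ofNat_ne_top : (2:ℝ≥0∞) ≠ ⊤))).add
      (ENNReal.Tendsto.const_mul hB (Or.inr (ENNReal.ofNat_ne_top : (2:ℝ≥0∞) ≠ ⊤)))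
    simpa using this
  exact tendsto_of_tendsto_of_tendsto_of_le_of_le tendsto_const_nhds hbound
    (fun n => by positivity) key

end aux2

/-- Convergence in `L²(Ω;E)` of the Gaussian sum `∑ γ_k • x_k`. -/
def GaussianSumConvL2 {Ω : Type*} [MeasurableSpace Ω] (μ : Measure Ω) (γ : ℕ → Ω → ℝ)
    {E : Type*} [NormedAddCommGroup E] [NormedSpace ℝ E] (x : ℕ → E) : Prop :=
  ∃ g : Ω → E, Tendsto (fun n => eLpNorm (fun ω => (∑ k ∈ Finset.range n, γ k ω • x k) - g ω) 2 μ)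
    atTop (𝓝 0)

/-- A family of operators is uniformly γ-radonifying if for every orthonormal basis `(h_k)` of `H`
and every sequence `(T_k)` in `𝒯` the Gaussian sum `∑ γ_k T_k h_k` converges in `L²(Ω;E)`. -/
def UnifGammaRad {Ω : Type*} [MeasurableSpace Ω] (μ : Measure Ω) (γ : ℕ → Ω → ℝ)
    {H E : Type*} [NormedAddCommGroup H] [InnerProductSpace ℝ H]
    [NormedAddCommGroup E] [NormedSpace ℝ E]
    (𝒯 : Set (H →L[ℝ] E)) : Prop :=
  ∀ (b : HilbertBasis ℕ ℝ H) (T : ℕ → H →L[ℝ] E), (∀ k, T k ∈ 𝒯) →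
    GaussianSumConvL2 μ γ (fun k => T k (b k))

/-- The closure of a set of operators in the strong operator topology. -/
def sotClosure {H E : Type*} [NormedAddCommGroup H] [InnerProductSpace ℝ H]
    [NormedAddCommGroup E] [NormedSpace ℝ E] (𝒯 : Set (H →L[ℝ] E)) : Set (H →L[ℝ] E) :=
  {S | ∀ ε > (0 : ℝ), ∀ s : Finset H, ∃ T ∈ 𝒯, ∀ h ∈ s, ‖S h - T h‖ < ε}

lemma add_sub_add_comm_aux {E : Type*} [AddCommGroup E] (A B u v : E) :
    (A - u) + (B - v) = (A + B) - (u + v) := by abel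

set_option maxHeartbeats 1000000 in
theorem sotClosure_unifGammaRad
    {Ω : Type*} [MeasurableSpace Ω] (μ : Measure Ω) [IsProbabilityMeasure μ]
    (γ : ℕ → Ω → ℝ) (hγ : IsGaussianSeq μ γ)
    {H E : Type*} [NormedAddCommGroup H] [InnerProductSpace ℝ H] [CompleteSpace H]
    [NormedAddCommGroup E] [NormedSpace ℝ E] [CompleteSpace E]
    (hH : Nonempty (HilbertBasis ℕ ℝ H))
    (𝒯 : Set (H →L[ℝ] E)) (h𝒯 : UnifGammaRad μ γ 𝒯) :
    UnifGammaRad μ γ (sotClosure 𝒯) := by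
  intro b S hS
  have hchoice : ∀ k : ℕ, ∃ T ∈ 𝒯, ‖S k (b k) - T (b k)‖ < (1/2:ℝ)^k := by
    intro k
    obtain ⟨T, hT, h⟩ := hS k ((1/2:ℝ)^k) (by positivity) {b k}
    exact ⟨T, hT, h (b k) (Finset.mem_singleton_self _)⟩
  choose T hTmem hTclose using hchoice
  set d : ℕ → E := fun k => S k (b k) - T k (b k) with hd
  have hsum : Summable fun k => ‖d k‖ :=
    Summable.of_nonneg_of_le (fun k => norm_nonneg _) (fun k => (hTclose k).le)
      summable_geometric_two
  obtain ⟨g₂, hg₂m, hg₂⟩ := convL2_of_summable hγ d hsum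
  obtain ⟨g₁, hg₁⟩ := h𝒯 b T hTmem
  refine ⟨fun ω => g₂ ω + g₁ ω, ?_⟩
  have hmeas : ∀ n, AEStronglyMeasurable
      (fun ω => (∑ k ∈ Finset.range n, γ k ω • d k) - g₂ ω) μ := by
    intro n
    refine AEStronglyMeasurable.sub ?_ hg₂m
    exact Finset.aestronglyMeasurable_fun_sum _ fun k _ =>
      ((hγ.measurable k).stronglyMeasurable.smul_const _).aestronglyMeasurable
  have hkey := tendsto_eLpNorm_add hmeas hg₂ hg₁
  refine hkey.congr fun n => ?_
  refine congrArg (fun u => eLpNorm u 2 μ) ?_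
  funext ω
  have hsplit : (∑ k ∈ Finset.range n, γ k ω • S k (b k)) =
      (∑ k ∈ Finset.range n, γ k ω • d k) + ∑ k ∈ Finset.range n, γ k ω • T k (b k) := by
    rw [← Finset.sum_add_distrib]
    refine Finset.sum_congr rfl fun k _ => ?_
    rw [← smul_add, hd, sub_add_cancel]
  rw [hsplit]
  exact add_sub_add_comm_aux _ _ _ _
end
end

section
/- Let H be a Hilbert space and let (h_n)_{n∈ℤ} be a sequence in H. Suppose there exists a function φ : ℕ → ℝ₊ such that |[h_n, h_m]| ≤ φ(n−m) for all n ≥ m in ℤ and ∑_{j∈ℕ} φ(j) < ∞. Then (h_n)_{n∈ℤ} is a Hilbert sequence; in fact for all scalar sequences (α_n)_{n∈ℤ} ∈ ℓ²(ℤ) one has ‖∑_{n∈ℤ} α_n h_n‖² ≤ (φ(0) + 2∑_{j≥1} φ(j)) ∑_{n∈ℤ} |α_n|². -/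
open Filter
open scoped Topology

noncomputable section

/-- `(h_i)_{i ∈ ι}` is a Hilbert sequence with admissible constant `C`:
`‖∑ α_i h_i‖² ≤ C² ∑ |α_i|²` for all (finitely supported) scalar sequences. -/
def IsHilbertSeqWith (𝕜 : Type*) {H ι : Type*} [RCLike 𝕜] [NormedAddCommGroup H]
    [InnerProductSpace 𝕜 H] (h : ι → H) (C : ℝ) : Prop :=
  ∀ (s : Finset ι) (α : ι → 𝕜),
    ‖∑ n ∈ s, α n • h n‖ ^ 2 ≤ C ^ 2 * ∑ n ∈ s, ‖α n‖ ^ 2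

lemma hasSum_natAbs_aux (φ : ℕ → ℝ) (hsum : Summable φ) :
    HasSum (fun k : ℤ => φ k.natAbs) (φ 0 + 2 * ∑' j : ℕ, φ (j + 1)) := by
  have h2 : Summable (fun j : ℕ => φ (j + 1)) := (summable_nat_add_iff 1).2 hsum
  have hA : HasSum (fun j : ℕ => φ j) (φ 0 + ∑' j : ℕ, φ (j + 1)) := by
    have := hsum.hasSum
    rwa [Summable.tsum_eq_zero_add hsum] at this
  have hpos : HasSum (fun n : ℕ => φ ((n : ℤ)).natAbs) (φ 0 + ∑' j : ℕ, φ (j + 1)) := by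
    simpa using hA
  have hneg : HasSum (fun n : ℕ => φ ((-(n + 1) : ℤ)).natAbs) (∑' j : ℕ, φ (j + 1)) := by
    have e : (fun n : ℕ => φ ((-(n + 1) : ℤ)).natAbs) = fun n : ℕ => φ (n + 1) := by
      funext n
      have : ((-(n + 1) : ℤ)).natAbs = n + 1 := by omega
      rw [this]
    rw [e]; exact h2.hasSum
  have := HasSum.of_nat_of_neg_add_one (f := fun k : ℤ => φ k.natAbs) hpos hneg
  convert this using 1
  ring

theorem hilbertSeq_of_offDiagonal_decay
    {𝕜 H : Type*} [RCLike 𝕜] [NormedAddCommGroup H] [InnerProductSpace 𝕜 H]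
    [CompleteSpace H]
    (h : ℤ → H) (φ : ℕ → ℝ) (hφ : ∀ j, 0 ≤ φ j)
    (hdec : ∀ m n : ℤ, m ≤ n → ‖(inner 𝕜 (h n) (h m) : 𝕜)‖ ≤ φ (n - m).toNat)
    (hsum : Summable φ) :
    -- `(h_n)` is a Hilbert sequence, with the explicit constant:
    (∃ C : ℝ, 0 < C ∧ IsHilbertSeqWith 𝕜 h C) ∧
    (∀ (s : Finset ℤ) (α : ℤ → 𝕜),
      ‖∑ n ∈ s, α n • h n‖ ^ 2 ≤
        (φ 0 + 2 * ∑' j : ℕ, φ (j + 1)) * ∑ n ∈ s, ‖α n‖ ^ 2) ∧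
    -- and for every `α ∈ ℓ²(ℤ)` the series converges with the same bound:
    (∀ α : lp (fun _ : ℤ => 𝕜) 2,
      Summable (fun n => α n • h n) ∧
      ‖∑' n : ℤ, α n • h n‖ ^ 2 ≤
        (φ 0 + 2 * ∑' j : ℕ, φ (j + 1)) * ∑' n : ℤ, ‖α n‖ ^ 2) := by
  set K : ℝ := φ 0 + 2 * ∑' j : ℕ, φ (j + 1) with hK
  have hKsum := hasSum_natAbs_aux φ hsum
  have hK0 : 0 ≤ K := by
    rw [hK, ← hKsum.tsum_eq]
    exact tsum_nonneg fun k => hφ k.natAbs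
  -- symmetric bound on inner products
  have hψ : ∀ n m : ℤ, ‖(inner 𝕜 (h n) (h m) : 𝕜)‖ ≤ φ (n - m).natAbs := by
    intro n m
    rcases le_total m n with hle | hle
    · have e : (n - m).natAbs = (n - m).toNat := by omega
      rw [e]; exact hdec m n hle
    · have e : (n - m).natAbs = (m - n).toNat := by omega
      rw [e, ← inner_conj_symm, RCLike.norm_conj]
      exact hdec n m hle
  -- row sums are bounded by K
  have row : ∀ (s : Finset ℤ) (n : ℤ), ∑ m ∈ s, φ (n - m).natAbs ≤ K := by
    intro s n
    have hsub : ∑ m ∈ s, φ (n - m).natAbs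
        = ∑ k ∈ s.image (fun m => n - m), φ k.natAbs := by
      rw [Finset.sum_image]
      intro x _ y _ hxy
      exact sub_right_injective hxy
    rw [hsub]
    calc ∑ k ∈ s.image (fun m => n - m), φ k.natAbs
        ≤ ∑' k : ℤ, φ k.natAbs :=
          Summable.sum_le_tsum _ (fun k _ => hφ k.natAbs) hKsum.summable
      _ = K := hKsum.tsum_eq
  -- the main finite bound
  have main : ∀ (s : Finset ℤ) (α : ℤ → 𝕜),
      ‖∑ n ∈ s, α n • h n‖ ^ 2 ≤ K * ∑ n ∈ s, ‖α n‖ ^ 2 := by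
    intro s α
    have step1 : ‖∑ n ∈ s, α n • h n‖ ^ 2
        ≤ ∑ n ∈ s, ∑ m ∈ s, ‖α n‖ * ‖α m‖ * φ (n - m).natAbs := by
      calc ‖∑ n ∈ s, α n • h n‖ ^ 2
          = RCLike.re (inner 𝕜 (∑ n ∈ s, α n • h n) (∑ m ∈ s, α m • h m) : 𝕜) :=
            (inner_self_eq_norm_sq _).symm
        _ ≤ ‖(inner 𝕜 (∑ n ∈ s, α n • h n) (∑ m ∈ s, α m • h m) : 𝕜)‖ :=
            RCLike.re_le_norm _
        _ = ‖∑ n ∈ s, ∑ m ∈ s, (inner 𝕜 (α n • h n) (α m • h m) : 𝕜)‖ := by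
            rw [sum_inner]
            congr 1
            exact Finset.sum_congr rfl fun n _ => inner_sum _ _ _
        _ ≤ ∑ n ∈ s, ∑ m ∈ s, ‖(inner 𝕜 (α n • h n) (α m • h m) : 𝕜)‖ :=
            (norm_sum_le _ _).trans
              (Finset.sum_le_sum fun n _ => norm_sum_le _ _)
        _ ≤ ∑ n ∈ s, ∑ m ∈ s, ‖α n‖ * ‖α m‖ * φ (n - m).natAbs := by
            refine Finset.sum_le_sum fun n _ => Finset.sum_le_sum fun m _ => ?_
            rw [inner_smul_left, inner_smul_right, norm_mul, norm_mul,
              RCLike.norm_conj, mul_assoc]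
            exact mul_le_mul_of_nonneg_left
              (mul_le_mul_of_nonneg_left (hψ n m) (norm_nonneg _)) (norm_nonneg _)
    have step2 : ∑ n ∈ s, ∑ m ∈ s, ‖α n‖ * ‖α m‖ * φ (n - m).natAbs
        ≤ ∑ n ∈ s, ∑ m ∈ s,
            (‖α n‖ ^ 2 / 2 * φ (n - m).natAbs + ‖α m‖ ^ 2 / 2 * φ (n - m).natAbs) := by
      refine Finset.sum_le_sum fun n _ => Finset.sum_le_sum fun m _ => ?_
      nlinarith [sq_nonneg (‖α n‖ - ‖α m‖), hφ (n - m).natAbs,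
        norm_nonneg (α n), norm_nonneg (α m)]
    have T1 : ∑ n ∈ s, ∑ m ∈ s, ‖α n‖ ^ 2 / 2 * φ (n - m).natAbs
        ≤ K / 2 * ∑ n ∈ s, ‖α n‖ ^ 2 := by
      calc ∑ n ∈ s, ∑ m ∈ s, ‖α n‖ ^ 2 / 2 * φ (n - m).natAbs
          = ∑ n ∈ s, ‖α n‖ ^ 2 / 2 * ∑ m ∈ s, φ (n - m).natAbs := by
            simp [Finset.mul_sum]
        _ ≤ ∑ n ∈ s, ‖α n‖ ^ 2 / 2 * K :=
            Finset.sum_le_sum fun n _ =>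
              mul_le_mul_of_nonneg_left (row s n) (by positivity)
        _ = K / 2 * ∑ n ∈ s, ‖α n‖ ^ 2 := by
            rw [Finset.mul_sum]
            exact Finset.sum_congr rfl fun n _ => by ring
    have T2 : ∑ n ∈ s, ∑ m ∈ s, ‖α m‖ ^ 2 / 2 * φ (n - m).natAbs
        ≤ K / 2 * ∑ n ∈ s, ‖α n‖ ^ 2 := by
      rw [Finset.sum_comm]
      calc ∑ m ∈ s, ∑ n ∈ s, ‖α m‖ ^ 2 / 2 * φ (n - m).natAbs
          = ∑ m ∈ s, ‖α m‖ ^ 2 / 2 * ∑ n ∈ s, φ (m - n).natAbs := by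
            rw [Finset.sum_congr rfl fun m _ => ?_]
            rw [Finset.mul_sum]
            refine Finset.sum_congr rfl fun n _ => ?_
            congr 2
            omega
        _ ≤ ∑ m ∈ s, ‖α m‖ ^ 2 / 2 * K :=
            Finset.sum_le_sum fun m _ =>
              mul_le_mul_of_nonneg_left (row s m) (by positivity)
        _ = K / 2 * ∑ n ∈ s, ‖α n‖ ^ 2 := by
            rw [Finset.mul_sum]
            exact Finset.sum_congr rfl fun n _ => by ring
    calc ‖∑ n ∈ s, α n • h n‖ ^ 2
        ≤ ∑ n ∈ s, ∑ m ∈ s,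
            (‖α n‖ ^ 2 / 2 * φ (n - m).natAbs + ‖α m‖ ^ 2 / 2 * φ (n - m).natAbs) :=
          step1.trans step2
      _ = (∑ n ∈ s, ∑ m ∈ s, ‖α n‖ ^ 2 / 2 * φ (n - m).natAbs)
          + ∑ n ∈ s, ∑ m ∈ s, ‖α m‖ ^ 2 / 2 * φ (n - m).natAbs := by
          simp [Finset.sum_add_distrib]
      _ ≤ K / 2 * ∑ n ∈ s, ‖α n‖ ^ 2 + K / 2 * ∑ n ∈ s, ‖α n‖ ^ 2 :=
          add_le_add T1 T2
      _ = K * ∑ n ∈ s, ‖α n‖ ^ 2 := by ring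
  refine ⟨⟨Real.sqrt K + 1, by positivity, ?_⟩, main, ?_⟩
  · intro s α
    refine (main s α).trans (mul_le_mul_of_nonneg_right ?_
      (Finset.sum_nonneg fun n _ => by positivity))
    nlinarith [Real.sq_sqrt hK0, Real.sqrt_nonneg K]
  · intro α
    have hα2 : Summable (fun n => ‖α n‖ ^ 2) := by
      have := (lp.memℓp α).summable (by norm_num : 0 < (2 : ENNReal).toReal)
      have e : (2 : ENNReal).toReal = (2 : ℕ) := by norm_num
      simpa [e, Real.rpow_natCast] using this
    have hsummable : Summable (fun n => α n • h n) := by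
      rw [summable_iff_vanishing_norm]
      intro ε hε
      obtain ⟨s, hs⟩ := summable_iff_vanishing_norm.1 hα2 (ε ^ 2 / (K + 1))
        (by positivity)
      refine ⟨s, fun t ht => ?_⟩
      have h1 : ∑ n ∈ t, ‖α n‖ ^ 2 < ε ^ 2 / (K + 1) := by
        have := hs t ht
        rwa [Real.norm_of_nonneg (Finset.sum_nonneg fun n _ => by positivity)] at this
      have h2 : ‖∑ n ∈ t, α n • h n‖ ^ 2 < ε ^ 2 := by
        have := main t α
        have hKK : K * (ε ^ 2 / (K + 1)) < ε ^ 2 := by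
          rw [mul_div_assoc']
          rw [div_lt_iff₀ (by linarith)]
          nlinarith
        calc ‖∑ n ∈ t, α n • h n‖ ^ 2 ≤ K * ∑ n ∈ t, ‖α n‖ ^ 2 := this
          _ ≤ K * (ε ^ 2 / (K + 1)) := by
              exact mul_le_mul_of_nonneg_left h1.le hK0
          _ < ε ^ 2 := hKK
      nlinarith [norm_nonneg (∑ n ∈ t, α n • h n)]
    refine ⟨hsummable, ?_⟩
    have t1 : Tendsto (fun t : Finset ℤ => ‖∑ n ∈ t, α n • h n‖ ^ 2) atTop
        (𝓝 (‖∑' n : ℤ, α n • h n‖ ^ 2)) := hsummable.hasSum.norm.pow 2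
    have t2 : Tendsto (fun t : Finset ℤ => K * ∑ n ∈ t, ‖α n‖ ^ 2) atTop
        (𝓝 (K * ∑' n : ℤ, ‖α n‖ ^ 2)) := hα2.hasSum.const_mul K
    exact le_of_tendsto_of_tendsto' t1 t2 fun t => main t α
end
end
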